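/- Fix an integer N ≥ 1 and real numbers μ_i[0] > 0 for 0 ≤ i ≤ N−1, and let the sequences μ_i : ℕ → (0,∞) be determined by the recursion μ_i[n+1] = μ_i[n]·exp( 2·Σ_{j=0}^{i−1} μ_j[n+1] ). Then for every c > 0 and every integer n₊ ≥ 1: Σ_{j=0}^{N−1} μ_j[0] ≤ c/2 + max_{0≤j≤N−1} μ_j[n₊] + e^{−c·n₊}·Σ_{j=0}^{N−1} μ_j[n₊]. -/

import Mathlib

/-- The recursive system modelling the energy exchange between `N` spherically symmetric
Vlasov beams: `μ_i[n+1] = μ_i[n]·exp(2·Σ_{j=0}^{i−1} μ_j[n+1])` for `0 ≤ i ≤ N−1`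
(the empty sum being `0` for `i = 0`). -/
def MuRec (N : ℕ) (μ : ℕ → ℕ → ℝ) : Prop :=
  ∀ i < N, ∀ n : ℕ,
    μ i (n + 1) = μ i n * Real.exp (2 * ∑ j ∈ Finset.range i, μ j (n + 1))

/-- **Smallness of the initial data in terms of the final profile.** For every `c > 0`
and `n₊ ≥ 1`, `Σ_j μ_j[0] ≤ c/2 + max_j μ_j[n₊] + e^{−c·n₊}·Σ_j μ_j[n₊]`. -/
theorem mu_system_initial_data_smallness (N : ℕ) (hN : 1 ≤ N) (μ : ℕ → ℕ → ℝ)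
    (hpos : ∀ i < N, ∀ n : ℕ, 0 < μ i n) (hrec : MuRec N μ)
    (c : ℝ) (hc : 0 < c) (nplus : ℕ) (hnp : 1 ≤ nplus) :
    ∑ j ∈ Finset.range N, μ j 0 ≤
      c / 2 +
        (Finset.range N).sup'
          (Finset.nonempty_range_iff.mpr (Nat.one_le_iff_ne_zero.mp hN))
          (fun j => μ j nplus) +
        Real.exp (-(c * nplus)) * ∑ j ∈ Finset.range N, μ j nplus := by
  classical
  set M := (Finset.range N).sup'
      (Finset.nonempty_range_iff.mpr (Nat.one_le_iff_ne_zero.mp hN))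
      (fun j => μ j nplus) with hM
  have hMle : ∀ j < N, μ j nplus ≤ M := fun j hj =>
    Finset.le_sup' (fun j => μ j nplus) (Finset.mem_range.mpr hj)
  have hM0 : 0 ≤ M := le_trans (hpos 0 hN nplus).le (hMle 0 hN)
  have hsumpos : ∀ n, 0 ≤ ∑ j ∈ Finset.range N, μ j n := fun n =>
    Finset.sum_nonneg fun j hj => (hpos j (Finset.mem_range.mp hj) n).le
  -- monotonicity
  have hstep : ∀ i < N, ∀ n, μ i n ≤ μ i (n + 1) := by
    intro i hi n
    rw [hrec i hi n]
    have hs : 0 ≤ ∑ j ∈ Finset.range i, μ j (n + 1) :=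
      Finset.sum_nonneg fun j hj =>
        (hpos j (lt_trans (Finset.mem_range.mp hj) hi) _).le
    exact le_mul_of_one_le_right (hpos i hi n).le (Real.one_le_exp (by linarith))
  have hmono : ∀ i < N, ∀ m n : ℕ, m ≤ n → μ i m ≤ μ i n := by
    intro i hi m n hmn
    induction n with
    | zero => simp [Nat.le_zero.mp hmn]
    | succ n ih =>
      rcases eq_or_lt_of_le hmn with h | h
      · exact le_of_eq (by rw [h])
      · exact le_trans (ih (Nat.lt_succ_iff.mp h)) (hstep i hi n)
  by_cases hsmall : ∑ j ∈ Finset.range N, μ j 0 ≤ c / 2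
  · have h2 : 0 ≤ Real.exp (-(c * nplus)) * ∑ j ∈ Finset.range N, μ j nplus :=
      mul_nonneg (Real.exp_pos _).le (hsumpos nplus)
    linarith
  push_neg at hsmall
  set Q : ℕ → Prop := fun i => c / 2 < ∑ j ∈ Finset.range (i + 1), μ j 0 with hQ
  have hQdec : DecidablePred Q := fun _ => Classical.dec _
  have hQex : ∃ i, Q i := ⟨N - 1, by simpa [hQ, Nat.sub_add_cancel hN] using hsmall⟩
  let i0 := Nat.find hQex
  have hi0Q : Q i0 := Nat.find_spec hQex
  have hi0N : i0 < N := by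
    by_contra h
    push_neg at h
    have : Q (N - 1) := by simpa [hQ, Nat.sub_add_cancel hN] using hsmall
    have := Nat.find_le (h := hQex) this
    omega
  have hprev : ∑ j ∈ Finset.range i0, μ j 0 ≤ c / 2 := by
    rcases Nat.eq_zero_or_pos i0 with h | h
    · rw [h]; simp; positivity
    · have hnot : ¬ Q (i0 - 1) := Nat.find_min hQex (by omega)
      simp only [hQ] at hnot
      push_neg at hnot
      have : i0 - 1 + 1 = i0 := by omega
      rwa [this] at hnot
  -- growth for indices j > i0
  have hgrow : ∀ j, i0 < j → j < N → ∀ n : ℕ, μ j 0 * Real.exp (c * n) ≤ μ j n := by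
    intro j hij hjN n
    induction n with
    | zero => simp
    | succ n ih =>
      have hsub : Finset.range (i0 + 1) ⊆ Finset.range j :=
        Finset.range_subset_range.mpr (by omega)
      have hle1 : ∑ k ∈ Finset.range (i0 + 1), μ k 0
          ≤ ∑ k ∈ Finset.range (i0 + 1), μ k (n + 1) :=
        Finset.sum_le_sum fun k hk =>
          hmono k (by have := Finset.mem_range.mp hk; omega) 0 (n + 1) (Nat.zero_le _)
      have hle2 : ∑ k ∈ Finset.range (i0 + 1), μ k (n + 1)
          ≤ ∑ k ∈ Finset.range j, μ k (n + 1) :=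
        Finset.sum_le_sum_of_subset_of_nonneg hsub fun k hk _ =>
          (hpos k (lt_trans (Finset.mem_range.mp hk) hjN) _).le
      have hc2 : c ≤ 2 * ∑ k ∈ Finset.range j, μ k (n + 1) := by
        have := hi0Q
        simp only [hQ] at this
        linarith
      have hexp : Real.exp c ≤ Real.exp (2 * ∑ k ∈ Finset.range j, μ k (n + 1)) :=
        Real.exp_le_exp.mpr hc2
      calc μ j 0 * Real.exp (c * (n + 1 : ℕ))
          = (μ j 0 * Real.exp (c * n)) * Real.exp c := by
            rw [mul_assoc, ← Real.exp_add]; push_cast; ring_nf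
        _ ≤ μ j n * Real.exp c :=
            mul_le_mul_of_nonneg_right ih (Real.exp_pos _).le
        _ ≤ μ j n * Real.exp (2 * ∑ k ∈ Finset.range j, μ k (n + 1)) :=
            mul_le_mul_of_nonneg_left hexp (hpos j hjN n).le
        _ = μ j (n + 1) := (hrec j hjN n).symm
  -- split the sum
  have hsplit : ∑ j ∈ Finset.range N, μ j 0
      = ∑ j ∈ Finset.range (i0 + 1), μ j 0 + ∑ j ∈ Finset.Ico (i0 + 1) N, μ j 0 := by
    rw [Finset.range_eq_Ico, Finset.range_eq_Ico]
    exact (Finset.sum_Ico_consecutive _ (Nat.zero_le _) (by omega : i0 + 1 ≤ N)).symm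
  have hfirst : ∑ j ∈ Finset.range (i0 + 1), μ j 0 ≤ c / 2 + M := by
    rw [Finset.sum_range_succ]
    have h1 : μ i0 0 ≤ μ i0 nplus := hmono i0 hi0N 0 nplus (Nat.zero_le _)
    have h2 : μ i0 nplus ≤ M := hMle i0 hi0N
    linarith
  have hsecond : ∑ j ∈ Finset.Ico (i0 + 1) N, μ j 0
      ≤ Real.exp (-(c * nplus)) * ∑ j ∈ Finset.range N, μ j nplus := by
    have h1 : ∑ j ∈ Finset.Ico (i0 + 1) N, μ j 0
        ≤ ∑ j ∈ Finset.Ico (i0 + 1) N, Real.exp (-(c * nplus)) * μ j nplus := by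
      refine Finset.sum_le_sum fun j hj => ?_
      obtain ⟨hj1, hj2⟩ := Finset.mem_Ico.mp hj
      have hg := hgrow j (by omega) hj2 nplus
      have hE := Real.exp_pos (c * nplus)
      rw [Real.exp_neg, mul_comm, ← div_eq_mul_inv, le_div_iff₀ hE]
      linarith
    have h2 : ∑ j ∈ Finset.Ico (i0 + 1) N, Real.exp (-(c * nplus)) * μ j nplus
        ≤ Real.exp (-(c * nplus)) * ∑ j ∈ Finset.range N, μ j nplus := by
      rw [← Finset.mul_sum]
      refine mul_le_mul_of_nonneg_left ?_ (Real.exp_pos _).le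
      rw [Finset.range_eq_Ico]
      exact Finset.sum_le_sum_of_subset_of_nonneg
        (Finset.Ico_subset_Ico (Nat.zero_le _) le_rfl)
        (fun k hk _ => (hpos k (Finset.mem_Ico.mp hk).2 _).le)
    linarith
  linarith [hsplit, hfirst, hsecond]
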